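/- arXiv:2306.08417 — 2 statements merged into one kernel-verified Lean document; each statement's English description precedes it below -/
import Mathlib

section
/- For any finite list of n tasks with nonnegative arrival times and execution times, the completion time (makespan) of processing tasks in nondecreasing order of arrival times (FCFS) is less than or equal to the completion time of processing the tasks in any other permutation, where for an ordered sequence of tasks the completion time is defined recursively by C_0 = 0 and C_j = max(C_{j-1}, arrival of j-th task) + execution time of j-th task. -/
/-- Completion time of processing tasks in the given order, starting from time `C`. -/
def comp (a e : ℕ → ℝ) : ℝ → List ℕ → ℝ
  | C, [] => C
  | C, i :: l => comp a e (max C (a i) + e i) l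

/-- Makespan of a queue of tasks (indices). -/
def makespan (a e : ℕ → ℝ) (l : List ℕ) : ℝ := comp a e 0 l

lemma comp_mono (a e : ℕ → ℝ) (l : List ℕ) :
    ∀ {C C' : ℝ}, C ≤ C' → comp a e C l ≤ comp a e C' l := by
  induction l with
  | nil => intro C C' h; simpa [comp] using h
  | cons i t ih =>
      intro C C' h
      simp only [comp]
      exact ih (by gcongr)

lemma comp_swap (a e : ℕ → ℝ) (he : ∀ i, 0 ≤ e i) (i j : ℕ) (hij : a i ≤ a j)
    (C : ℝ) (t : List ℕ) :
    comp a e C (i :: j :: t) ≤ comp a e C (j :: i :: t) := by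
  simp only [comp]
  apply comp_mono
  have h1 := he i
  have h2 := he j
  rcases le_total C (a i) with h | h <;> rcases le_total C (a j) with h' | h' <;>
    simp [max_def] <;> split_ifs <;> linarith

lemma comp_move_front (a e : ℕ → ℝ) (he : ∀ i, 0 ≤ e i) (x : ℕ) :
    ∀ (u : List ℕ) (C : ℝ) (v : List ℕ), (∀ y ∈ u, a y ≤ a x) →
      comp a e C (u ++ x :: v) ≤ comp a e C (x :: (u ++ v)) := by
  intro u
  induction u with
  | nil => intro C v _; simp
  | cons y u' ih =>
      intro C v hu
      have hyx : a y ≤ a x := hu y List.mem_cons_self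
      calc comp a e C ((y :: u') ++ x :: v)
          = comp a e (max C (a y) + e y) (u' ++ x :: v) := rfl
        _ ≤ comp a e (max C (a y) + e y) (x :: (u' ++ v)) :=
            ih _ _ (fun z hz => hu z (List.mem_cons_of_mem _ hz))
        _ = comp a e C (y :: x :: (u' ++ v)) := rfl
        _ ≤ comp a e C (x :: y :: (u' ++ v)) := comp_swap a e he y x hyx C _
        _ = comp a e C (x :: (y :: u') ++ v) := rfl

lemma comp_sorted_le (a e : ℕ → ℝ) (he : ∀ i, 0 ≤ e i) :
    ∀ (l' l : List ℕ) (C : ℝ), l.Perm l' →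
      l.Pairwise (fun i j => a i ≤ a j) → comp a e C l ≤ comp a e C l' := by
  intro l'
  induction l' with
  | nil => intro l C hp _; rw [List.perm_nil.mp hp]
  | cons x t' ih =>
      intro l C hp hs
      have hx : x ∈ l := hp.mem_iff.mpr List.mem_cons_self
      obtain ⟨u, v, rfl⟩ := List.append_of_mem hx
      rw [List.pairwise_append] at hs
      obtain ⟨hu, hv, huv⟩ := hs
      have hux : ∀ y ∈ u, a y ≤ a x := fun y hy => huv y hy x List.mem_cons_self
      have hperm2 : (u ++ v).Perm t' := by
        have : (x :: (u ++ v)).Perm (x :: t') :=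
          (List.perm_middle (a := x) (l₁ := u) (l₂ := v)).symm.trans hp
        exact this.cons_inv
      have hsorted2 : (u ++ v).Pairwise (fun i j => a i ≤ a j) := by
        rw [List.pairwise_append]
        refine ⟨hu, hv.of_cons, fun b hb c hc => ?_⟩
        exact le_trans (huv b hb x List.mem_cons_self)
          (List.rel_of_pairwise_cons hv hc)
      calc comp a e C (u ++ x :: v)
          ≤ comp a e C (x :: (u ++ v)) := comp_move_front a e he x u C v hux
        _ = comp a e (max C (a x) + e x) (u ++ v) := rfl
        _ ≤ comp a e (max C (a x) + e x) t' := ih _ _ hperm2 hsorted2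
        _ = comp a e C (x :: t') := rfl

/-- processing tasks in nondecreasing order of arrival times (FCFS) gives
a makespan at most that of any other permutation of the tasks. -/
theorem fcfs_optimal (a e : ℕ → ℝ) (ha : ∀ i, 0 ≤ a i) (he : ∀ i, 0 ≤ e i)
    (l l' : List ℕ) (hperm : l.Perm l')
    (hsorted : l.Pairwise (fun i j => a i ≤ a j)) :
    makespan a e l ≤ makespan a e l' := by
  exact comp_sorted_le a e he l' l 0 hperm hsorted
end

section
/- Swapping two adjacent tasks that are out of FCFS order does not increase the makespan: if in an ordering task x immediately precedes task y and a_x ≥ a_y (arrival of x is at least arrival of y), then swapping x and y yields a makespan less than or equal to the original makespan. -/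
lemma comp_append (a e : ℕ → ℝ) (P L : List ℕ) :
    ∀ C, comp a e C (P ++ L) = comp a e (comp a e C P) L := by
  induction P with
  | nil => intro C; simp [comp]
  | cons i P ih => intro C; simp [comp, ih]

/-- swapping two adjacent tasks that are out of FCFS order (x immediately
precedes y but `a y ≤ a x`) does not increase the makespan. -/
theorem adjacent_swap (a e : ℕ → ℝ) (ha : ∀ i, 0 ≤ a i) (he : ∀ i, 0 ≤ e i)
    (P Q : List ℕ) (x y : ℕ) (hxy : a y ≤ a x) :
    makespan a e (P ++ y :: x :: Q) ≤ makespan a e (P ++ x :: y :: Q) := by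
  unfold makespan
  rw [comp_append, comp_append]
  set C := comp a e 0 P
  simp only [comp]
  apply comp_mono
  have hey := he y
  have hex := he x
  rcases le_total C (a y) with h1 | h1 <;> rcases le_total C (a x) with h2 | h2 <;>
    simp [max_def] <;> intros <;> split_ifs <;> linarith
end
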